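/- Let n be a natural number, F : ℝⁿ → ℝ a differentiable function, t ≤ T real numbers, and V : ℝⁿ → ℝⁿ a vector field admitting a global flow φ : ℝ → ℝⁿ → ℝⁿ, meaning φ(0,x) = x for all x, φ(s+s',x) = φ(s,φ(s',x)) for all s,s',x, and for every x the curve s ↦ φ(s,x) is differentiable with derivative V(φ(s,x)) at every s. Suppose that dF_x(V(x)) = 1 for every x with t ≤ F(x) ≤ T. Then for every s ∈ [0, T − t], the image of the superlevel set {x | F(x) ≥ t} under φ(s,·) equals the superlevel set {x | F(x) ≥ t + s}. -/

import Mathlib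

open Set Filter

private lemma ev_gt_of_deriv_pos {g : ℝ → ℝ} {d c : ℝ} (h : HasDerivAt g d c) (hd : 0 < d) :
    ∀ᶠ u in nhdsWithin c (Set.Ioi c), g c < g u := by
  have h1 : Filter.Tendsto (slope g c) (nhdsWithin c {c}ᶜ) (nhds d) :=
    hasDerivAt_iff_tendsto_slope.mp h
  have h2 : Filter.Tendsto (slope g c) (nhdsWithin c (Set.Ioi c)) (nhds d) :=
    h1.mono_left (nhdsWithin_mono c (fun x hx => ne_of_gt hx))
  have h3 : ∀ᶠ u in nhdsWithin c (Set.Ioi c), 0 < slope g c u :=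
    h2.eventually (eventually_gt_nhds hd)
  filter_upwards [h3, self_mem_nhdsWithin] with u hu hu'
  have hcu : (0:ℝ) < u - c := sub_pos.mpr hu'
  rw [slope_def_field] at hu
  rcases div_pos_iff.mp hu with ⟨h1', _⟩ | ⟨_, h2'⟩
  · linarith
  · linarith

private lemma cross_level (g g' : ℝ → ℝ) (hg : ∀ u, HasDerivAt g (g' u) u)
    (t T : ℝ) (hband : ∀ u, t ≤ g u → g u ≤ T → g' u = 1)
    (ℓ : ℝ) (hℓ1 : t ≤ ℓ) (hℓ2 : ℓ ≤ T) (a b : ℝ) (hab : a ≤ b) (ha : ℓ ≤ g a) : ℓ ≤ g b := by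
  by_contra hb
  push_neg at hb
  have hgc : Continuous g := continuous_iff_continuousAt.mpr fun u => (hg u).continuousAt
  set S : Set ℝ := Set.Icc a b ∩ g ⁻¹' (Set.Ici ℓ) with hSdef
  have hScomp : IsCompact S :=
    isCompact_Icc.inter_right (isClosed_Ici.preimage hgc)
  have hSne : S.Nonempty := ⟨a, ⟨le_refl a, hab⟩, ha⟩
  set u0 := sSup S with hu0
  have hu0S : u0 ∈ S := hScomp.sSup_mem hSne
  obtain ⟨⟨hau0, hu0b⟩, hgu0⟩ := hu0S
  have hu0b' : u0 < b := lt_of_le_of_ne hu0b (fun h => absurd (h ▸ hgu0) (not_le.mpr hb))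
  have hlt : ∀ u ∈ Set.Ioc u0 b, g u < ℓ := by
    intro u hu
    by_contra hgu
    push_neg at hgu
    have : u ∈ S := ⟨⟨hau0.trans hu.1.le, hu.2⟩, hgu⟩
    exact absurd (le_csSup hScomp.bddAbove this) (not_le.mpr hu.1)
  have hgu0eq : g u0 = ℓ := by
    refine le_antisymm ?_ hgu0
    have hcl : IsClosed {u | g u ≤ ℓ} := isClosed_le hgc continuous_const
    have hsub : Set.Ioc u0 b ⊆ {u | g u ≤ ℓ} := fun u hu => (hlt u hu).le
    have : u0 ∈ closure (Set.Ioc u0 b) := by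
      rw [closure_Ioc (ne_of_lt hu0b')]
      exact ⟨le_refl _, hu0b⟩ 
    exact closure_minimal hsub hcl this
  have hder1 : g' u0 = 1 := hband u0 (hgu0eq ▸ hℓ1) (hgu0eq ▸ hℓ2)
  have hev : ∀ᶠ u in nhdsWithin u0 (Set.Ioi u0), g u0 < g u :=
    ev_gt_of_deriv_pos (hder1 ▸ hg u0) one_pos
  obtain ⟨m, hm, hmsub⟩ := mem_nhdsGT_iff_exists_Ioc_subset.mp hev
  set u1 := min m b with hu1
  have hu1mem : u1 ∈ Set.Ioc u0 m := ⟨lt_min hm hu0b', min_le_left _ _⟩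
  have h1 : g u0 < g u1 := hmsub hu1mem
  have h2 : g u1 < ℓ := hlt u1 ⟨hu1mem.1, min_le_right _ _⟩
  rw [hgu0eq] at h1
  linarith

private lemma linear_on_band (g g' : ℝ → ℝ) (hg : ∀ u, HasDerivAt g (g' u) u)
    (t T : ℝ) (hband : ∀ u, t ≤ g u → g u ≤ T → g' u = 1)
    (a : ℝ) (hat : t ≤ g a) (haT : g a ≤ T) :
    ∀ b, a ≤ b → b ≤ a + (T - g a) → g b = g a + (b - a) := by
  intro b hab hbT
  have hgc : Continuous g := continuous_iff_continuousAt.mpr fun u => (hg u).continuousAt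
  set S : Set ℝ := {u | u ∈ Set.Icc a b ∧ ∀ w ∈ Set.Icc a u, g w = g a + (w - a)} with hSdef
  have haS : a ∈ S := ⟨⟨le_refl a, hab⟩, fun w hw => by
    have hwa : w = a := le_antisymm hw.2 hw.1
    simp [hwa]⟩
  have hbdd : BddAbove S := ⟨b, fun u hu => hu.1.2⟩
  have hne : S.Nonempty := ⟨a, haS⟩
  set c := sSup S with hc
  have hac : a ≤ c := le_csSup hbdd haS
  have hcb : c ≤ b := csSup_le hne fun u hu => hu.1.2
  have hcS : ∀ w ∈ Set.Icc a c, g w = g a + (w - a) := by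
    intro w hw
    rcases eq_or_lt_of_le hw.2 with heq | hlt
    · rcases eq_or_lt_of_le hw.1 with heq' | hlt'
      · simp [← heq']
      · have hsub : Set.Ico a w ⊆ {u | g u = g a + (u - a)} := by
          intro u hu
          obtain ⟨v, hvS, huv⟩ := exists_lt_of_lt_csSup hne (heq ▸ hu.2)
          exact hvS.2 u ⟨hu.1, huv.le⟩
        have hcl : IsClosed {u | g u = g a + (u - a)} :=
          isClosed_eq hgc (continuous_const.add (continuous_id.sub continuous_const))
        have hwcl : w ∈ closure (Set.Ico a w) := by
          rw [closure_Ico (ne_of_lt hlt')]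
          exact ⟨hlt'.le, le_refl w⟩
        exact closure_minimal hsub hcl hwcl
    · obtain ⟨v, hvS, huv⟩ := exists_lt_of_lt_csSup hne hlt
      exact hvS.2 w ⟨hw.1, huv.le⟩
  have hgceq : g c = g a + (c - a) := hcS c ⟨hac, le_refl c⟩
  rcases eq_or_lt_of_le hcb with hceq | hclt
  · exact hceq ▸ hgceq
  -- c < b : derive a contradiction by extending
  exfalso
  have hgcT : g c ≤ T := by rw [hgceq]; linarith
  have hgct : t ≤ g c := by rw [hgceq]; linarith
  have hgcT' : g c < T := by
    rcases eq_or_lt_of_le hgcT with heq | h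
    · exfalso
      have : c = a + (T - g a) := by rw [hgceq] at heq; linarith
      linarith
    · exact h
  have hder1 : g' c = 1 := hband c hgct hgcT
  have hev1 : ∀ᶠ u in nhdsWithin c (Set.Ioi c), g c < g u :=
    ev_gt_of_deriv_pos (hder1 ▸ hg c) one_pos
  have hev2 : ∀ᶠ u in nhdsWithin c (Set.Ioi c), g u < T := by
    have : ∀ᶠ u in nhds c, g u < T := (hgc.continuousAt).eventually_lt continuousAt_const hgcT'
    exact this.filter_mono nhdsWithin_le_nhds
  obtain ⟨m, hm, hmsub⟩ := mem_nhdsGT_iff_exists_Ioc_subset.mp (hev1.and hev2)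
  set d := min m b with hd
  have hcd : c < d := lt_min hm hclt
  have hdm : d ≤ m := min_le_left _ _
  have hdb : d ≤ b := min_le_right _ _
  -- on [c, d], g' = 1
  have hone : ∀ u ∈ Set.Icc c d, g' u = 1 := by
    intro u hu
    rcases eq_or_lt_of_le hu.1 with heq | h
    · exact heq ▸ hder1
    · obtain ⟨h1, h2⟩ := hmsub ⟨h, hu.2.trans hdm⟩
      exact hband u (hgct.trans h1.le) h2.le
  have hconst : ∀ u ∈ Set.Icc c d, g u - u = g c - c := by
    have hcont : ContinuousOn (fun u => g u - u) (Set.Icc c d) :=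
      (hgc.sub continuous_id).continuousOn
    have hderz : ∀ x ∈ Set.Ico c d, HasDerivWithinAt (fun u => g u - u) 0 (Set.Ici x) x := by
      intro x hx
      have := ((hg x).sub (hasDerivAt_id x)).hasDerivWithinAt (s := Set.Ici x)
      rwa [hone x ⟨hx.1, hx.2.le⟩, sub_self] at this
    exact fun u hu => constant_of_has_deriv_right_zero hcont hderz u hu
  have hdS : d ∈ S := by
    refine ⟨⟨hac.trans hcd.le, hdb⟩, fun w hw => ?_⟩
    rcases le_or_gt w c with h | h
    · exact hcS w ⟨hw.1, h⟩
    · have := hconst w ⟨h.le, hw.2⟩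
      rw [hgceq] at this
      linarith
  exact absurd (le_csSup hbdd hdS) (not_le.mpr hcd)


/-- Flow computation in the proof of the baby Morse theory lemma: if a vector field `V`
with global flow `φ` satisfies `dF_x(V x) = 1` on `F⁻¹ [t,T]`, then for `s ∈ [0, T-t]`
the time-`s` flow carries the superlevel set `{F ≥ t}` onto `{F ≥ t+s}`. -/
theorem flow_maps_superlevel_sets (n : ℕ)
    (F : EuclideanSpace ℝ (Fin n) → ℝ) (hF : Differentiable ℝ F)
    (t T : ℝ) (htT : t ≤ T)
    (V : EuclideanSpace ℝ (Fin n) → EuclideanSpace ℝ (Fin n))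
    (φ : ℝ → EuclideanSpace ℝ (Fin n) → EuclideanSpace ℝ (Fin n))
    (hφ0 : ∀ x, φ 0 x = x)
    (hφadd : ∀ s s' x, φ (s + s') x = φ s (φ s' x))
    (hφder : ∀ x s, HasDerivAt (fun u => φ u x) (V (φ s x)) s)
    (hV : ∀ x, F x ∈ Set.Icc t T → fderiv ℝ F x (V x) = 1) :
    ∀ s ∈ Set.Icc (0 : ℝ) (T - t),
      φ s '' {x | t ≤ F x} = {x | t + s ≤ F x} := by
  intro s hs
  obtain ⟨hs0, hsT⟩ := hs
  -- derivative setup for each x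
  have hg : ∀ (x : EuclideanSpace ℝ (Fin n)) (u : ℝ),
      HasDerivAt (fun u => F (φ u x)) (fderiv ℝ F (φ u x) (V (φ u x))) u := by
    intro x u
    exact (hF (φ u x)).hasFDerivAt.comp_hasDerivAt u (hφder x u)
  have hband : ∀ (x : EuclideanSpace ℝ (Fin n)) (u : ℝ),
      t ≤ F (φ u x) → F (φ u x) ≤ T → fderiv ℝ F (φ u x) (V (φ u x)) = 1 :=
    fun x u h1 h2 => hV _ ⟨h1, h2⟩
  ext y
  simp only [Set.mem_image, Set.mem_setOf_eq]
  constructor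
  · rintro ⟨x, hx, rfl⟩
    set g : ℝ → ℝ := fun u => F (φ u x) with hgdef
    have hg0 : g 0 = F x := by rw [hgdef]; simp [hφ0]
    rcases le_or_gt T (g 0) with hT0 | hT0
    · have := cross_level g _ (hg x) t T (hband x) T htT (le_refl T) 0 s hs0 hT0
      have hts : t + s ≤ T := by linarith
      exact hts.trans this
    · rcases le_or_gt s (T - g 0) with hcase | hcase
      · have := linear_on_band g _ (hg x) t T (hband x) 0 (hg0 ▸ hx) hT0.le s hs0
          (by linarith)
        show t + s ≤ g s
        rw [this, hg0]
        linarith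
      · set c := T - g 0 with hcdef
        have hc0 : 0 ≤ c := by linarith
        have hgc : g c = g 0 + (c - 0) :=
          linear_on_band g _ (hg x) t T (hband x) 0 (hg0 ▸ hx) hT0.le c hc0 (by linarith)
        have hgcT : g c = T := by rw [hgc, hcdef]; ring
        have := cross_level g _ (hg x) t T (hband x) T htT (le_refl T) c s (by linarith)
          (le_of_eq hgcT.symm)
        show t + s ≤ g s
        linarith
  · intro hy
    refine ⟨φ (-s) y, ?_, ?_⟩
    swap
    · have h1 := hφadd s (-s) y
      rw [add_neg_cancel, hφ0] at h1
      exact h1.symm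
    · set x := φ (-s) y with hxdef
      set g : ℝ → ℝ := fun u => F (φ u x) with hgdef
      have hgs : g s = F y := by
        have h1 := hφadd s (-s) y
        rw [add_neg_cancel, hφ0] at h1
        rw [hgdef]; simp only [← hxdef, ← h1]
        rw [hxdef, ← h1]
      have hg0 : g 0 = F x := by rw [hgdef]; simp [hφ0]
      by_contra h0
      push_neg at h0
      rw [← hg0] at h0
      -- g 0 < t but g s ≥ t + s : find first crossing of level t
      have hgcont : Continuous g :=
        continuous_iff_continuousAt.mpr fun u => (hg x u).continuousAt
      set S : Set ℝ := Set.Icc 0 s ∩ g ⁻¹' (Set.Ici t) with hSdef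
      have hScomp : IsCompact S := isCompact_Icc.inter_right (isClosed_Ici.preimage hgcont)
      have hSne : S.Nonempty := ⟨s, ⟨hs0, le_refl s⟩, by rw [Set.mem_preimage, hgs]; exact le_trans (by linarith) hy⟩
      set u0 := sInf S with hu0def
      have hu0S : u0 ∈ S := hScomp.sInf_mem hSne
      obtain ⟨⟨hu00, hu0s⟩, hgu0⟩ := hu0S
      have hu0pos : 0 < u0 := by
        rcases eq_or_lt_of_le hu00 with heq | h
        · exfalso; rw [← heq] at hgu0; exact absurd hgu0 (not_le.mpr h0)
        · exact h
      have hlt : ∀ u ∈ Set.Ico 0 u0, g u < t := by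
        intro u hu
        by_contra hgu
        push_neg at hgu
        have : u ∈ S := ⟨⟨hu.1, hu.2.le.trans hu0s⟩, hgu⟩
        exact absurd (csInf_le hScomp.bddBelow this) (not_le.mpr hu.2)
      have hgu0eq : g u0 = t := by
        refine le_antisymm ?_ hgu0
        have hcl : IsClosed {u | g u ≤ t} := isClosed_le hgcont continuous_const
        have hsub : Set.Ico 0 u0 ⊆ {u | g u ≤ t} := fun u hu => (hlt u hu).le
        have hu0cl : u0 ∈ closure (Set.Ico 0 u0) := by
          rw [closure_Ico (ne_of_lt hu0pos)]
          exact ⟨hu0pos.le, le_refl _⟩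
        exact closure_minimal hsub hcl hu0cl
      have hlin := linear_on_band g _ (hg x) t T (hband x) u0 (le_of_eq hgu0eq.symm)
        (hgu0eq ▸ htT) s hu0s (by rw [hgu0eq]; linarith)
      rw [hgu0eq, hgs] at hlin
      linarith
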